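/- arXiv:2112.01663 — 3 statements merged into one kernel-verified Lean document; each statement's English description precedes it below -/
import Mathlib

section
/- Let n ≥ 2 and let L ∈ ℝ^{n×n} be a matrix that is symmetric with respect to the Minkowski inner product. Suppose that L is null negative semi-definite but not null negative-definite. Then there exists a nonzero null vector x ∈ ℝⁿ and a real number λ such that L x = λ x. -/
open Matrix Set

noncomputable section

/-- The Minkowski inner product on `ℝⁿ`: `⟨v,w⟩ = -v₀w₀ + Σ_{j≥1} vⱼwⱼ`. -/
def mink {n : ℕ} (v w : Fin n → ℝ) : ℝ :=
  ∑ j : Fin n, (if (j : ℕ) = 0 then -(v j * w j) else v j * w j)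

/-- A vector is null if its Minkowski square vanishes. -/
def IsNull {n : ℕ} (v : Fin n → ℝ) : Prop := mink v v = 0

/-- A matrix is symmetric with respect to the Minkowski inner product. -/
def MinkSymm {n : ℕ} (L : Matrix (Fin n) (Fin n) ℝ) : Prop :=
  ∀ v w : Fin n → ℝ, mink (L.mulVec v) w = mink v (L.mulVec w)

/-- A matrix is null negative-definite: `⟨Lv,v⟩ < 0` for all nonzero null `v`. -/
def NullNegDef {n : ℕ} (L : Matrix (Fin n) (Fin n) ℝ) : Prop :=
  ∀ v : Fin n → ℝ, v ≠ 0 → IsNull v → mink (L.mulVec v) v < 0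

/-- A matrix is null negative semi-definite: `⟨Lv,v⟩ ≤ 0` for all null `v`. -/
def NullNegSemi {n : ℕ} (L : Matrix (Fin n) (Fin n) ℝ) : Prop :=
  ∀ v : Fin n → ℝ, IsNull v → mink (L.mulVec v) v ≤ 0

/-- Entrywise derivative (within a set) of a matrix-valued function of a real variable. -/
def matDerivWithin {n : ℕ} (L : ℝ → Matrix (Fin n) (Fin n) ℝ) (s : Set ℝ) (t : ℝ) :
    Matrix (Fin n) (Fin n) ℝ :=
  Matrix.of fun i j => derivWithin (fun u => L u i j) s t

lemma mink_eq {n : ℕ} [NeZero n] (v w : Fin n → ℝ) :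
    mink v w = v ⬝ᵥ w - 2 * (v 0 * w 0) := by
  unfold mink
  have h : ∀ j : Fin n, j ∈ Finset.univ → (if (j : ℕ) = 0 then -(v j * w j) else v j * w j)
      = v j * w j - (if j = (0 : Fin n) then 2 * (v j * w j) else 0) := by
    intro j _
    rcases eq_or_ne j 0 with rfl | hj
    · simp
      ring
    · rw [if_neg (by intro h; apply hj; ext; simp [h]), if_neg hj]
      ring
  rw [Finset.sum_congr rfl h, Finset.sum_sub_distrib,
    Finset.sum_ite_eq' Finset.univ (0 : Fin n)]
  simp [dotProduct]

lemma mink_comm {n : ℕ} [NeZero n] (v w : Fin n → ℝ) : mink v w = mink w v := by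
  simp only [mink_eq, dotProduct_comm]
  ring

lemma mink_add_left {n : ℕ} [NeZero n] (u v w : Fin n → ℝ) :
    mink (u + v) w = mink u w + mink v w := by
  simp only [mink_eq, add_dotProduct, Pi.add_apply]
  ring

lemma mink_smul_left {n : ℕ} [NeZero n] (r : ℝ) (u w : Fin n → ℝ) :
    mink (r • u) w = r * mink u w := by
  simp only [mink_eq, smul_dotProduct, Pi.smul_apply, smul_eq_mul]
  ring

lemma mink_add_right {n : ℕ} [NeZero n] (u v w : Fin n → ℝ) :
    mink u (v + w) = mink u v + mink u w := by
  rw [mink_comm, mink_add_left, mink_comm v u, mink_comm w u]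

lemma mink_smul_right {n : ℕ} [NeZero n] (r : ℝ) (u w : Fin n → ℝ) :
    mink u (r • w) = r * mink u w := by
  rw [mink_comm, mink_smul_left, mink_comm w u]

lemma quartic_aux {a c d e : ℝ}
    (h : ∀ t : ℝ, 2 * a * t + c * t ^ 2 + d * t ^ 3 + e * t ^ 4 ≤ 0) : a = 0 := by
  have hc : Continuous fun t : ℝ => 2 * a + c * t + d * t ^ 2 + e * t ^ 3 := by continuity
  have hpos : ∀ t ∈ Set.Ioi (0 : ℝ), 2 * a + c * t + d * t ^ 2 + e * t ^ 3 ≤ 0 := by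
    intro t ht
    simp only [Set.mem_Ioi] at ht
    by_contra hcon
    push_neg at hcon
    have h1 := h t
    nlinarith [mul_pos ht hcon]
  have hneg : ∀ t ∈ Set.Iio (0 : ℝ), 0 ≤ 2 * a + c * t + d * t ^ 2 + e * t ^ 3 := by
    intro t ht
    simp only [Set.mem_Iio] at ht
    by_contra hcon
    push_neg at hcon
    have h1 := h t
    nlinarith [mul_pos_of_neg_of_neg ht hcon]
  have t1 : Filter.Tendsto (fun t : ℝ => 2 * a + c * t + d * t ^ 2 + e * t ^ 3)
      (nhdsWithin 0 (Set.Ioi 0)) (nhds (2 * a)) := by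
    have := (hc.tendsto 0).mono_left (nhdsWithin_le_nhds (s := Set.Ioi (0:ℝ)))
    simpa using this
  have t2 : Filter.Tendsto (fun t : ℝ => 2 * a + c * t + d * t ^ 2 + e * t ^ 3)
      (nhdsWithin 0 (Set.Iio 0)) (nhds (2 * a)) := by
    have := (hc.tendsto 0).mono_left (nhdsWithin_le_nhds (s := Set.Iio (0:ℝ)))
    simpa using this
  have le1 : 2 * a ≤ 0 :=
    le_of_tendsto t1 (Filter.eventually_of_mem self_mem_nhdsWithin hpos)
  have le2 : 0 ≤ 2 * a :=
    ge_of_tendsto t2 (Filter.eventually_of_mem self_mem_nhdsWithin hneg)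
  linarith

/-- null eigenvector lemma: a Minkowski-symmetric matrix that is
null negative semi-definite but not null negative-definite has a nonzero null
eigenvector. -/
theorem stmt_0 {n : ℕ} (hn : 2 ≤ n) (L : Matrix (Fin n) (Fin n) ℝ)
    (hsymm : MinkSymm L) (hsemi : NullNegSemi L) (hnotdef : ¬ NullNegDef L) :
    ∃ (x : Fin n → ℝ) (lam : ℝ), x ≠ 0 ∧ IsNull x ∧ L.mulVec x = lam • x := by
  haveI : NeZero n := ⟨by omega⟩
  unfold NullNegDef at hnotdef
  push_neg at hnotdef
  obtain ⟨x, hx0, hxnull, hxge⟩ := hnotdef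
  have hBxx : mink (L.mulVec x) x = 0 := le_antisymm (hsemi x hxnull) hxge
  have hnullx : mink x x = 0 := hxnull
  have hdxx : x ⬝ᵥ x = 2 * (x 0 * x 0) := by
    rw [mink_eq] at hnullx; linarith
  have hx00 : x 0 ≠ 0 := by
    intro h0
    apply hx0
    have hz : x ⬝ᵥ x = 0 := by rw [hdxx, h0]; ring
    exact dotProduct_self_eq_zero.mp hz
  -- the reflected null vector
  set xb : Fin n → ℝ := (2 * x 0) • (Pi.single (0 : Fin n) (1 : ℝ) : Fin n → ℝ) - x with hxbdef
  have hxb0 : xb 0 = x 0 := by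
    simp [hxbdef, Pi.single_eq_same]
    ring
  have hdxxb : x ⬝ᵥ xb = 0 := by
    simp [hxbdef, dotProduct_sub, dotProduct_smul,
      dotProduct_single, hdxx]
    ring
  have hdxbxb : xb ⬝ᵥ xb = 2 * (x 0 * x 0) := by
    simp [hxbdef, dotProduct_sub, sub_dotProduct, dotProduct_smul,
      smul_dotProduct, dotProduct_single, single_dotProduct,
      Pi.single_eq_same, hdxx, dotProduct_comm x]
    ring
  have hminkxxb : mink x xb = -(2 * (x 0 * x 0)) := by
    rw [mink_eq, hdxxb, hxb0]; ring
  have hminkxbxb : mink xb xb = 0 := by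
    rw [mink_eq, hdxbxb, hxb0]; ring
  -- the key step: L.mulVec x is mink-orthogonal to every admissible w
  have key : ∀ w : Fin n → ℝ, w 0 = 0 → x ⬝ᵥ w = 0 → mink (L.mulVec x) w = 0 := by
    intro w hw0 hxw
    have hminkxw : mink x w = 0 := by rw [mink_eq, hxw, hw0]; ring
    have hdxbw : xb ⬝ᵥ w = 0 := by
      simp [hxbdef, sub_dotProduct, smul_dotProduct,
        single_dotProduct, hxw, hw0]
    have hminkxbw : mink xb w = 0 := by rw [mink_eq, hdxbw, hw0]; ring
    set μ : ℝ := mink w w / (4 * (x 0 * x 0)) with hμ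
    have hμval : 4 * (x 0 * x 0) * μ = mink w w := by
      rw [hμ]
      field_simp
    set y : ℝ → (Fin n → ℝ) := fun t => x + t • w + (t ^ 2 * μ) • xb with hy
    have hynull : ∀ t, IsNull (y t) := by
      intro t
      show mink (y t) (y t) = 0
      rw [hy]
      simp only [mink_add_left, mink_add_right, mink_smul_left, mink_smul_right]
      rw [hnullx, hminkxw, hminkxxb, hminkxbxb, hminkxbw,
        mink_comm w x, hminkxw, mink_comm xb x, hminkxxb, mink_comm w xb, hminkxbw]
      nlinarith [hμval]
    have hform : ∀ t : ℝ, 2 * (mink (L.mulVec x) w) * t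
        + (mink (L.mulVec w) w + 2 * μ * mink (L.mulVec x) xb) * t ^ 2
        + (2 * μ * mink (L.mulVec w) xb) * t ^ 3
        + (μ ^ 2 * mink (L.mulVec xb) xb) * t ^ 4 ≤ 0 := by
      intro t
      have h1 := hsemi (y t) (hynull t)
      have hA1 : mink (L.mulVec w) x = mink (L.mulVec x) w := by
        rw [hsymm w x, mink_comm]
      have hA2 : mink (L.mulVec xb) x = mink (L.mulVec x) xb := by
        rw [hsymm xb x, mink_comm]
      have hA3 : mink (L.mulVec xb) w = mink (L.mulVec w) xb := by
        rw [hsymm xb w, mink_comm]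
      have hexp : mink (L.mulVec (y t)) (y t)
          = 2 * (mink (L.mulVec x) w) * t
          + (mink (L.mulVec w) w + 2 * μ * mink (L.mulVec x) xb) * t ^ 2
          + (2 * μ * mink (L.mulVec w) xb) * t ^ 3
          + (μ ^ 2 * mink (L.mulVec xb) xb) * t ^ 4 := by
        rw [hy]
        simp only [Matrix.mulVec_add, Matrix.mulVec_smul]
        simp only [mink_add_left, mink_add_right, mink_smul_left, mink_smul_right,
          smul_eq_mul]
        rw [hBxx, hA1, hA2, hA3]
        ring
      linarith [hexp ▸ h1]
    exact quartic_aux hform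
  -- conclude
  set lam : ℝ := (L.mulVec x 0) / (x 0) with hlam
  have hlamx : lam * x 0 = L.mulVec x 0 := by
    rw [hlam]; field_simp
  set w : Fin n → ℝ := L.mulVec x - lam • x with hwdef
  have hw0 : w 0 = 0 := by
    simp [hwdef]
    linarith [hlamx]
  have hdux : (L.mulVec x) ⬝ᵥ x = 2 * (L.mulVec x 0 * x 0) := by
    rw [mink_eq] at hBxx; linarith
  have hxw : x ⬝ᵥ w = 0 := by
    have hh : x ⬝ᵥ w = x ⬝ᵥ (L.mulVec x) - lam * (x ⬝ᵥ x) := by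
      rw [hwdef, dotProduct_sub, dotProduct_smul, smul_eq_mul]
    rw [hh, dotProduct_comm x (L.mulVec x), hdux, hdxx]
    linear_combination (-2 * x 0) * hlamx
  have h2 : mink (L.mulVec x) w = 0 := key w hw0 hxw
  have h3 : (L.mulVec x) ⬝ᵥ w = 0 := by
    rw [mink_eq, hw0] at h2; linarith
  have h4 : w ⬝ᵥ w = 0 := by
    rw [hwdef, sub_dotProduct, smul_dotProduct]
    rw [← hwdef, h3, hxw]
    simp
  have h5 : w = 0 := dotProduct_self_eq_zero.mp h4
  exact ⟨x, lam, hx0, hxnull, by rwa [hwdef, sub_eq_zero] at h5⟩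
end
end

section
/- Let n ≥ 2 and T > 0. Let B : [0,T] → ℝ^{n×n} be C² and let L : [0,T] → ℝ^{n×n} be C³ satisfying t L′(t) + L(t)² − L(t) + t² B(t) = 0 for all t ∈ [0,T], with L(0) = id. Then L″(0) = −(2/3) B(0). -/
open Matrix Set

noncomputable section

theorem aux5 {n : ℕ} (T : ℝ) (hT : 0 < T)
    (f b : Fin n → Fin n → ℝ → ℝ)
    (hb : ∀ i j, ContDiffOn ℝ 2 (b i j) (Icc 0 T))
    (hf : ∀ i j, ContDiffOn ℝ 3 (f i j) (Icc 0 T))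
    (hf0 : ∀ i j, f i j 0 = if i = j then (1:ℝ) else 0)
    (hE : ∀ t ∈ Icc (0:ℝ) T, ∀ i j, t * derivWithin (f i j) (Icc 0 T) t
        = f i j t - (∑ k, f i k t * f k j t) - t ^ 2 * b i j t) :
    ∀ i j, derivWithin (derivWithin (f i j) (Icc 0 T)) (Icc 0 T) 0 = -(2/3 : ℝ) * b i j 0 := by
  set s : Set ℝ := Icc (0:ℝ) T with hs
  have hsu : UniqueDiffOn ℝ s := uniqueDiffOn_Icc hT
  have h0s : (0:ℝ) ∈ s := Set.left_mem_Icc.2 hT.le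
  set g : Fin n → Fin n → ℝ → ℝ := fun i j => derivWithin (f i j) s with hg
  set g1 : Fin n → Fin n → ℝ → ℝ := fun i j => derivWithin (g i j) s with hg1
  set b1 : Fin n → Fin n → ℝ → ℝ := fun i j => derivWithin (b i j) s with hb1
  have hgC : ∀ i j, ContDiffOn ℝ 2 (g i j) s := fun i j =>
    (hf i j).derivWithin hsu (by norm_num)
  have hg1C : ∀ i j, ContDiffOn ℝ 1 (g1 i j) s := fun i j =>
    (hgC i j).derivWithin hsu (by norm_num)
  have hb1C : ∀ i j, ContDiffOn ℝ 1 (b1 i j) s := fun i j =>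
    (hb i j).derivWithin hsu (by norm_num)
  have hfd : ∀ i j, ∀ t ∈ s, HasDerivWithinAt (f i j) (g i j t) s t := fun i j t ht =>
    (((hf i j).differentiableOn (by norm_num)) t ht).hasDerivWithinAt
  have hgd : ∀ i j, ∀ t ∈ s, HasDerivWithinAt (g i j) (g1 i j t) s t := fun i j t ht =>
    (((hgC i j).differentiableOn (by norm_num)) t ht).hasDerivWithinAt
  have hbd : ∀ i j, ∀ t ∈ s, HasDerivWithinAt (b i j) (b1 i j t) s t := fun i j t ht =>
    (((hb i j).differentiableOn (by norm_num)) t ht).hasDerivWithinAt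
  have hg1d : ∀ i j, ∀ t ∈ s,
      HasDerivWithinAt (g1 i j) (derivWithin (g1 i j) s t) s t := fun i j t ht =>
    (((hg1C i j).differentiableOn (by norm_num)) t ht).hasDerivWithinAt
  have hb1d : ∀ i j, ∀ t ∈ s,
      HasDerivWithinAt (b1 i j) (derivWithin (b1 i j) s t) s t := fun i j t ht =>
    (((hb1C i j).differentiableOn (by norm_num)) t ht).hasDerivWithinAt
  have hpow : ∀ t ∈ s, HasDerivWithinAt (fun u : ℝ => u ^ 2) (2 * t) s t := by
    intro t ht; simpa using (hasDerivWithinAt_pow 2 t : HasDerivWithinAt _ _ s t)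
  have hid : ∀ t ∈ s, HasDerivWithinAt (fun u : ℝ => u) 1 s t := fun t ht =>
    hasDerivWithinAt_id t s
  -- first derivative identity
  have hE1 : ∀ t ∈ s, ∀ i j, g i j t + t * g1 i j t
      = g i j t - (∑ k, (g i k t * f k j t + f i k t * g k j t))
        - (2 * t * b i j t + t ^ 2 * b1 i j t) := by
    intro t ht i j
    have hLHS : HasDerivWithinAt (fun u => u * g i j u)
        (1 * g i j t + t * g1 i j t) s t := (hid t ht).mul (hgd i j t ht)
    have hsum : HasDerivWithinAt (fun u => ∑ k, f i k u * f k j u)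
        (∑ k, (g i k t * f k j t + f i k t * g k j t)) s t :=
      HasDerivWithinAt.fun_sum (fun k _ => (hfd i k t ht).mul (hfd k j t ht))
    have hq : HasDerivWithinAt (fun u => u ^ 2 * b i j u)
        (2 * t * b i j t + t ^ 2 * b1 i j t) s t := (hpow t ht).mul (hbd i j t ht)
    have hRHS : HasDerivWithinAt
        (fun u => f i j u - (∑ k, f i k u * f k j u) - u ^ 2 * b i j u)
        (g i j t - (∑ k, (g i k t * f k j t + f i k t * g k j t))
          - (2 * t * b i j t + t ^ 2 * b1 i j t)) s t :=
      ((hfd i j t ht).sub hsum).sub hq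
    have hcongr : derivWithin (fun u => u * g i j u) s t
        = derivWithin (fun u => f i j u - (∑ k, f i k u * f k j u) - u ^ 2 * b i j u) s t :=
      derivWithin_congr (fun x hx => hE x hx i j) (hE t ht i j)
    have h1 := hLHS.derivWithin (hsu t ht)
    have h2 := hRHS.derivWithin (hsu t ht)
    calc g i j t + t * g1 i j t = 1 * g i j t + t * g1 i j t := by ring
    _ = _ := by rw [← h1, hcongr, h2]
  -- L'(0) = 0
  have hg0 : ∀ i j, g i j 0 = 0 := by
    intro i j
    have h := hE1 0 h0s i j
    simp only [hf0, mul_ite, ite_mul, mul_one, mul_zero, one_mul, zero_mul,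
      Finset.sum_add_distrib, Finset.sum_ite_eq, Finset.sum_ite_eq',
      Finset.mem_univ, if_true] at h
    linarith
  -- second derivative identity at 0
  intro i j
  have hLHS : HasDerivWithinAt (fun u => g i j u + u * g1 i j u)
      (g1 i j 0 + (1 * g1 i j 0 + 0 * derivWithin (g1 i j) s 0)) s 0 :=
    (hgd i j 0 h0s).add ((hid 0 h0s).mul (hg1d i j 0 h0s))
  have hsum : HasDerivWithinAt
      (fun u => ∑ k, (g i k u * f k j u + f i k u * g k j u))
      (∑ k, ((g1 i k 0 * f k j 0 + g i k 0 * g k j 0)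
        + (g i k 0 * g k j 0 + f i k 0 * g1 k j 0))) s 0 :=
    HasDerivWithinAt.fun_sum (fun k _ =>
      ((hgd i k 0 h0s).mul (hfd k j 0 h0s)).add ((hfd i k 0 h0s).mul (hgd k j 0 h0s)))
  have h2t : HasDerivWithinAt (fun u : ℝ => 2 * u) 2 s 0 := by
    simpa using (hid 0 h0s).const_mul (2:ℝ)
  have hq1 : HasDerivWithinAt (fun u => 2 * u * b i j u)
      (2 * b i j 0 + 2 * 0 * b1 i j 0) s 0 := h2t.mul (hbd i j 0 h0s)
  have hq2 : HasDerivWithinAt (fun u => u ^ 2 * b1 i j u)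
      (2 * 0 * b1 i j 0 + 0 ^ 2 * derivWithin (b1 i j) s 0) s 0 :=
    (hpow 0 h0s).mul (hb1d i j 0 h0s)
  have hRHS : HasDerivWithinAt
      (fun u => g i j u - (∑ k, (g i k u * f k j u + f i k u * g k j u))
        - (2 * u * b i j u + u ^ 2 * b1 i j u))
      (g1 i j 0 - (∑ k, ((g1 i k 0 * f k j 0 + g i k 0 * g k j 0)
        + (g i k 0 * g k j 0 + f i k 0 * g1 k j 0)))
        - ((2 * b i j 0 + 2 * 0 * b1 i j 0)
          + (2 * 0 * b1 i j 0 + 0 ^ 2 * derivWithin (b1 i j) s 0))) s 0 :=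
    ((hgd i j 0 h0s).sub hsum).sub (hq1.add hq2)
  have hcongr : derivWithin (fun u => g i j u + u * g1 i j u) s 0
      = derivWithin (fun u => g i j u - (∑ k, (g i k u * f k j u + f i k u * g k j u))
        - (2 * u * b i j u + u ^ 2 * b1 i j u)) s 0 :=
    derivWithin_congr (fun x hx => hE1 x hx i j) (hE1 0 h0s i j)
  have h1 := hLHS.derivWithin (hsu 0 h0s)
  have h2 := hRHS.derivWithin (hsu 0 h0s)
  have key : g1 i j 0 + (1 * g1 i j 0 + 0 * derivWithin (g1 i j) s 0)
      = g1 i j 0 - (∑ k, ((g1 i k 0 * f k j 0 + g i k 0 * g k j 0)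
        + (g i k 0 * g k j 0 + f i k 0 * g1 k j 0)))
        - ((2 * b i j 0 + 2 * 0 * b1 i j 0)
          + (2 * 0 * b1 i j 0 + 0 ^ 2 * derivWithin (b1 i j) s 0)) := by
    rw [← h1, hcongr, h2]
  simp only [hf0, hg0, mul_ite, ite_mul, mul_one, mul_zero, one_mul, zero_mul,
    add_zero, zero_add, Finset.sum_add_distrib, Finset.sum_ite_eq, Finset.sum_ite_eq',
    Finset.mem_univ, if_true] at key
  linarith

/-- for a `C³` solution of `t L' + L² - L + t² B = 0` on `[0,T]` with
`B` of class `C²` and `L(0) = id`, the second derivative at `t = 0` equals `-(2/3) B(0)`. -/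
theorem stmt_5 {n : ℕ} (hn : 2 ≤ n) (T : ℝ) (hT : 0 < T)
    (B L : ℝ → Matrix (Fin n) (Fin n) ℝ)
    (hB : ∀ i j, ContDiffOn ℝ 2 (fun t => B t i j) (Set.Icc 0 T))
    (hL : ∀ i j, ContDiffOn ℝ 3 (fun t => L t i j) (Set.Icc 0 T))
    (hL0 : L 0 = 1)
    (hRic : ∀ t ∈ Set.Icc (0 : ℝ) T,
      t • matDerivWithin L (Set.Icc 0 T) t + L t * L t - L t + t ^ 2 • B t = 0) :
    matDerivWithin (fun t => matDerivWithin L (Set.Icc 0 T) t) (Set.Icc 0 T) 0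
      = -(2 / 3 : ℝ) • B 0 := by
  have hf0 : ∀ i j, L 0 i j = if i = j then (1:ℝ) else 0 := by
    intro i j; rw [hL0]; simp [Matrix.one_apply]
  have hE : ∀ t ∈ Set.Icc (0:ℝ) T, ∀ i j,
      t * derivWithin (fun u => L u i j) (Set.Icc 0 T) t
        = L t i j - (∑ k, L t i k * L t k j) - t ^ 2 * B t i j := by
    intro t ht i j
    have h := congrFun (congrFun (hRic t ht) i) j
    simp only [Matrix.add_apply, Matrix.sub_apply, Matrix.smul_apply, Matrix.mul_apply,
      Matrix.zero_apply, matDerivWithin, Matrix.of_apply, smul_eq_mul] at h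
    linarith
  have key := aux5 T hT (fun i j t => L t i j) (fun i j t => B t i j) hB hL hf0 hE
  ext i j
  have := key i j
  simp only [matDerivWithin, Matrix.of_apply, Matrix.smul_apply, smul_eq_mul]
  exact this
end
end

section
/- Let n ≥ 2, T > 0. Let B : [0,T] → ℝ^{n×n} be continuous with B(t) null negative-definite for all t ∈ [0,T], and let L : [0,T] → ℝ^{n×n} be continuous with each L(t) Minkowski-symmetric. Suppose there is t₀ ∈ (0,T] such that −L(t) is null negative-definite for all t ∈ (0,t₀) and −L(t₀) is not null negative-definite. Then −L(t₀) is null negative semi-definite, and there exist a nonzero null vector x₀ ∈ ℝⁿ and λ ∈ ℝ with L(t₀) x₀ = λ x₀ and ⟨L(t₀) x₀, x₀⟩ = 0. -/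
open Matrix Set

noncomputable section

namespace Stmt9Aux

def eps {n : ℕ} (j : Fin n) : ℝ := if (j : ℕ) = 0 then -1 else 1

lemma mink_eq {n : ℕ} (v w : Fin n → ℝ) : mink v w = ∑ j, eps j * (v j * w j) := by
  unfold mink eps
  refine Finset.sum_congr rfl fun j _ => by split_ifs <;> ring

lemma mink_comm {n : ℕ} (v w : Fin n → ℝ) : mink v w = mink w v := by
  simp only [mink_eq]; exact Finset.sum_congr rfl fun j _ => by ring

lemma mink_smul_add {n : ℕ} (a b : ℝ) (u v w : Fin n → ℝ) :
    mink (a • u + b • v) w = a * mink u w + b * mink v w := by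
  simp only [mink_eq, Finset.mul_sum, ← Finset.sum_add_distrib]
  refine Finset.sum_congr rfl fun j _ => by simp [Pi.add_apply]; ring

lemma mink_nondeg {n : ℕ} (u : Fin n → ℝ) (h : ∀ w, mink u w = 0) : u = 0 := by
  have h2 := h (fun j => eps j * u j)
  rw [mink_eq] at h2
  have heq : ∀ j ∈ Finset.univ, eps j * (u j * (eps j * u j)) = u j ^ 2 := by
    intro j _; unfold eps; split_ifs <;> ring
  rw [Finset.sum_congr rfl heq] at h2
  funext j
  have := (Finset.sum_eq_zero_iff_of_nonneg (fun j _ => sq_nonneg (u j))).mp h2 j (Finset.mem_univ j)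
  exact pow_eq_zero_iff (by norm_num) |>.mp this

lemma mink_zero_right {n : ℕ} (u : Fin n → ℝ) : mink u 0 = 0 := by
  simp [mink_eq]

lemma mink_neg_left {n : ℕ} (u w : Fin n → ℝ) : mink (-u) w = -mink u w := by
  simp only [mink_eq, Pi.neg_apply, ← Finset.sum_neg_distrib]
  exact Finset.sum_congr rfl fun j _ => by ring



lemma null_eigen {n : ℕ} (M : Matrix (Fin n) (Fin n) ℝ) (hsymm : MinkSymm M)
    (hsemi : ∀ v : Fin n → ℝ, IsNull v → 0 ≤ mink (M.mulVec v) v)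
    (x₀ : Fin n → ℝ) (hx0 : x₀ ≠ 0) (hnull : IsNull x₀)
    (hzero : mink (M.mulVec x₀) x₀ = 0) :
    ∃ lam : ℝ, M.mulVec x₀ = lam • x₀ := by
  classical
  let A : (Fin n → ℝ) →L[ℝ] (Fin n → ℝ) := LinearMap.toContinuousLinearMap (Matrix.mulVecLin M)
  let P : Fin n → ((Fin n → ℝ) →L[ℝ] ℝ) := fun j => ContinuousLinearMap.proj j
  have hA : ∀ v : Fin n → ℝ, A v = M.mulVec v := fun v => rfl
  let q : (Fin n → ℝ) → ℝ := fun v => mink (M.mulVec v) v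
  let c : (Fin n → ℝ) → ℝ := fun v => mink v v
  let q' : (Fin n → ℝ) →L[ℝ] ℝ :=
    ∑ j, eps j • ((M.mulVec x₀ j) • P j + (x₀ j) • ((P j).comp A))
  let c' : (Fin n → ℝ) →L[ℝ] ℝ := ∑ j, eps j • ((x₀ j) • P j + (x₀ j) • P j)
  have hq' : HasStrictFDerivAt q q' x₀ := by
    have h1 : HasStrictFDerivAt (fun v : Fin n → ℝ => ∑ j, eps j * (M.mulVec v j * v j)) q' x₀ := by
      apply HasStrictFDerivAt.fun_sum
      intro j _
      have hf : HasStrictFDerivAt (fun v : Fin n → ℝ => M.mulVec v j) ((P j).comp A) x₀ :=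
        ((P j).comp A).hasStrictFDerivAt
      have hg : HasStrictFDerivAt (fun v : Fin n → ℝ => v j) (P j) x₀ := (P j).hasStrictFDerivAt
      exact (hf.mul hg).const_mul (eps j)
    have : (fun v : Fin n → ℝ => ∑ j, eps j * (M.mulVec v j * v j)) = q := by
      funext v; rw [show q v = mink (M.mulVec v) v from rfl, mink_eq]
    rwa [this] at h1
  have hc' : HasStrictFDerivAt c c' x₀ := by
    have h1 : HasStrictFDerivAt (fun v : Fin n → ℝ => ∑ j, eps j * (v j * v j)) c' x₀ := by
      apply HasStrictFDerivAt.fun_sum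
      intro j _
      have hg : HasStrictFDerivAt (fun v : Fin n → ℝ => v j) (P j) x₀ := (P j).hasStrictFDerivAt
      exact (hg.mul hg).const_mul (eps j)
    have : (fun v : Fin n → ℝ => ∑ j, eps j * (v j * v j)) = c := by
      funext v; rw [show c v = mink v v from rfl, mink_eq]
    rwa [this] at h1
  have hextr : IsLocalExtrOn q {v | c v = c x₀} x₀ := by
    have hmin : IsMinOn q {v | c v = c x₀} x₀ := by
      intro v hv
      have h := hv
      simp only [Set.mem_setOf_eq, c] at h
      have hvnull : IsNull v := by unfold IsNull; rw [h]; exact hnull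
      have := hsemi v hvnull
      simp only [q, Set.mem_setOf_eq]
      calc mink (M.mulVec x₀) x₀ = 0 := hzero
        _ ≤ mink (M.mulVec v) v := this
    exact Or.inl hmin.localize
  obtain ⟨a, b, hab, heq⟩ := hextr.exists_multipliers_of_hasStrictFDerivAt_1d hc' hq'
  have hq'apply : ∀ w : Fin n → ℝ, q' w = 2 * mink (M.mulVec x₀) w := by
    intro w
    have h1 : q' w = ∑ j, eps j * (M.mulVec x₀ j * w j + x₀ j * (M.mulVec w j)) := by
      simp [q', ContinuousLinearMap.sum_apply, P, hA, ContinuousLinearMap.proj_apply]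
      exact Finset.sum_congr rfl fun j _ => by ring
    have hsplit : ∑ j, eps j * (M.mulVec x₀ j * w j + x₀ j * (M.mulVec w j))
        = mink (M.mulVec x₀) w + mink x₀ (M.mulVec w) := by
      rw [mink_eq, mink_eq, ← Finset.sum_add_distrib]
      exact Finset.sum_congr rfl fun j _ => by ring
    rw [h1, hsplit, ← hsymm x₀ w]; ring
  have hc'apply : ∀ w : Fin n → ℝ, c' w = 2 * mink x₀ w := by
    intro w
    have h1 : c' w = ∑ j, eps j * (x₀ j * w j + x₀ j * w j) := by
      simp [c', ContinuousLinearMap.sum_apply, P, ContinuousLinearMap.proj_apply]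
      exact Finset.sum_congr rfl fun j _ => by ring
    rw [h1, mink_eq, Finset.mul_sum]
    exact Finset.sum_congr rfl fun j _ => by ring
  have hkey : ∀ w : Fin n → ℝ, mink (b • M.mulVec x₀ + a • x₀) w = 0 := by
    intro w
    have h0 : (a • c' + b • q') w = 0 := by rw [heq]; rfl
    have h2 : a * c' w + b * q' w = 0 := by simpa using h0
    rw [hq'apply, hc'apply] at h2
    rw [mink_smul_add]
    linarith
  have hlin : b • M.mulVec x₀ + a • x₀ = 0 := mink_nondeg _ hkey
  have hb : b ≠ 0 := by
    intro hb0
    rw [hb0, zero_smul, zero_add] at hlin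
    have ha : a ≠ 0 := by
      intro ha0; apply hab; simp [ha0, hb0, Prod.ext_iff]
    exact hx0 ((smul_eq_zero.mp hlin).resolve_left ha)
  have h2 : b • M.mulVec x₀ = (-a) • x₀ := by
    rw [neg_smul]; exact eq_neg_of_add_eq_zero_left hlin
  refine ⟨-a / b, ?_⟩
  calc M.mulVec x₀ = b⁻¹ • (b • M.mulVec x₀) := by rw [inv_smul_smul₀ hb]
    _ = b⁻¹ • ((-a) • x₀) := by rw [h2]
    _ = (-a / b) • x₀ := by rw [smul_smul, div_eq_inv_mul]

end Stmt9Aux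


/-- if `-L(t)` is null negative-definite on `(0,t₀)` but not at `t₀`,
then by continuity `-L(t₀)` is null negative semi-definite and `L(t₀)` has a nonzero
null eigenvector `x₀` with `⟨L(t₀)x₀,x₀⟩ = 0`. -/
theorem stmt_9 {n : ℕ} (hn : 2 ≤ n) (T : ℝ) (hT : 0 < T)
    (B L : ℝ → Matrix (Fin n) (Fin n) ℝ)
    (hBcont : ∀ i j, ContinuousOn (fun t => B t i j) (Set.Icc 0 T))
    (hBdef : ∀ t ∈ Set.Icc (0 : ℝ) T, NullNegDef (B t))
    (hLcont : ∀ i j, ContinuousOn (fun t => L t i j) (Set.Icc 0 T))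
    (hLsymm : ∀ t ∈ Set.Icc (0 : ℝ) T, MinkSymm (L t))
    (t₀ : ℝ) (ht₀ : t₀ ∈ Set.Ioc 0 T)
    (hdef : ∀ t ∈ Set.Ioo (0 : ℝ) t₀, NullNegDef (-(L t)))
    (hnotdef : ¬ NullNegDef (-(L t₀))) :
    NullNegSemi (-(L t₀)) ∧
      ∃ (x₀ : Fin n → ℝ) (lam : ℝ), x₀ ≠ 0 ∧ IsNull x₀ ∧
        (L t₀).mulVec x₀ = lam • x₀ ∧ mink ((L t₀).mulVec x₀) x₀ = 0 := by
  obtain ⟨ht₀pos, ht₀T⟩ := ht₀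
  have ht₀Icc : t₀ ∈ Set.Icc (0 : ℝ) T := ⟨ht₀pos.le, ht₀T⟩
  have hsub : Set.Ioo (0 : ℝ) t₀ ⊆ Set.Icc 0 T :=
    fun t ht => ⟨ht.1.le, ht.2.le.trans ht₀T⟩
  -- continuity of the quadratic form along t
  have hgcont : ∀ v : Fin n → ℝ,
      ContinuousOn (fun t => mink ((L t).mulVec v) v) (Set.Icc 0 T) := by
    intro v
    have hrw : (fun t => mink ((L t).mulVec v) v)
        = fun t => ∑ j, Stmt9Aux.eps j * ((∑ k, L t j k * v k) * v j) := by
      funext t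
      rw [Stmt9Aux.mink_eq]
      exact Finset.sum_congr rfl fun j _ => by rw [Matrix.mulVec, dotProduct]
    rw [hrw]
    apply continuousOn_finset_sum
    intro j _
    exact (continuousOn_const.mul (((continuousOn_finset_sum _ fun k _ =>
      (hLcont j k).mul continuousOn_const)).mul continuousOn_const))
  -- Part 1: null negative semi-definiteness at t₀
  have hsemi : NullNegSemi (-(L t₀)) := by
    intro v hvnull
    rw [Matrix.neg_mulVec, Stmt9Aux.mink_neg_left, neg_nonpos]
    by_cases hv0 : v = 0
    · subst hv0
      simp [Matrix.mulVec_zero, Stmt9Aux.mink_zero_right, mink]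
    · have hpos : ∀ t ∈ Set.Ioo (0 : ℝ) t₀, 0 ≤ mink ((L t).mulVec v) v := by
        intro t ht
        have := hdef t ht v hv0 hvnull
        rw [Matrix.neg_mulVec, Stmt9Aux.mink_neg_left, neg_lt_zero] at this
        exact this.le
      have hne : Filter.NeBot (nhdsWithin t₀ (Set.Ioo 0 t₀)) :=
        right_nhdsWithin_Ioo_neBot ht₀pos
      have htend : Filter.Tendsto (fun t => mink ((L t).mulVec v) v)
          (nhdsWithin t₀ (Set.Ioo 0 t₀)) (nhds (mink ((L t₀).mulVec v) v)) :=
        ((hgcont v).continuousWithinAt ht₀Icc).mono hsub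
      exact ge_of_tendsto htend
        (Filter.eventually_of_mem self_mem_nhdsWithin fun t ht => hpos t ht)
  -- Part 2: existence of the null eigenvector
  have hsemi' : ∀ v : Fin n → ℝ, IsNull v → 0 ≤ mink ((L t₀).mulVec v) v := by
    intro v hv
    have := hsemi v hv
    rw [Matrix.neg_mulVec, Stmt9Aux.mink_neg_left, neg_nonpos] at this
    exact this
  unfold NullNegDef at hnotdef
  push_neg at hnotdef
  obtain ⟨x₀, hx0, hxnull, hxge⟩ := hnotdef
  have hxzero : mink ((L t₀).mulVec x₀) x₀ = 0 := by
    rw [Matrix.neg_mulVec, Stmt9Aux.mink_neg_left] at hxge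
    have h1 := hsemi' x₀ hxnull
    linarith
  obtain ⟨lam, hlam⟩ := Stmt9Aux.null_eigen (L t₀) (hLsymm t₀ ht₀Icc) hsemi' x₀ hx0 hxnull hxzero
  exact ⟨hsemi, x₀, lam, hx0, hxnull, hlam, hxzero⟩
end
end
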